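/- (Spatially homogeneous case of Remark 3.2.) Let α_h, β_h, α_v, β_v > 0 satisfy α_h α_v ≤ β_h β_v, let m(z) = α_v z/(α_v z + β_v) and F(z) = α_h(1−z)m(z) − β_h z. Then F(z) < 0 for every z ∈ (0,1], so 0 is the unique zero of F in [0,1]; and every differentiable z : [0,∞) → ℝ with z′(t) = F(z(t)) for all t ≥ 0 and z(0) ∈ [0,1] satisfies z(t) ∈ [0,1] for all t ≥ 0 and z(t) → 0 as t → ∞. -/

import Mathlib

open Real Filter Set Topology

set_option maxHeartbeats 1000000

lemma aux_Fle {αh βh αv βv : ℝ} (hαh : 0 < αh) (hβh : 0 < βh) (hαv : 0 < αv)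
    (hβv : 0 < βv) (hC : αh * αv ≤ βh * βv) {y : ℝ} (hy : 0 ≤ y) :
    αh * (1 - y) * (αv * y / (αv * y + βv)) - βh * y ≤ 0 := by
  have hD : 0 < αv * y + βv := by positivity
  have h : αh * (1 - y) * (αv * y / (αv * y + βv)) - βh * y
      = (αh * (1 - y) * (αv * y) - βh * y * (αv * y + βv)) / (αv * y + βv) := by
    field_simp
  rw [h]
  apply div_nonpos_of_nonpos_of_nonneg _ hD.le
  nlinarith [mul_nonneg hy (sub_nonneg.mpr hC), mul_nonneg (sq_nonneg y) (by positivity : (0:ℝ) ≤ αv * (αh + βh))]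

lemma aux_Fneg {αh βh αv βv : ℝ} (hαh : 0 < αh) (hβh : 0 < βh) (hαv : 0 < αv)
    (hβv : 0 < βv) (hC : αh * αv ≤ βh * βv) {y : ℝ} (hy : 0 < y) (hy1 : y ≤ 1) :
    αh * (1 - y) * (αv * y / (αv * y + βv)) - βh * y < 0 := by
  have hD : 0 < αv * y + βv := by positivity
  have h : αh * (1 - y) * (αv * y / (αv * y + βv)) - βh * y
      = (αh * (1 - y) * (αv * y) - βh * y * (αv * y + βv)) / (αv * y + βv) := by
    field_simp
  rw [h]
  apply div_neg_of_neg_of_pos _ hD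
  nlinarith [mul_pos hy (mul_pos hβh hβv), mul_nonneg (sub_nonneg.mpr hC) (mul_nonneg hy.le (sub_nonneg.mpr hy1)), mul_pos (mul_pos hβh hαv) (mul_pos hy hy)]

lemma aux_key {αh βh αv βv : ℝ} (hαh : 0 < αh) (hβh : 0 < βh) (hαv : 0 < αv)
    (hβv : 0 < βv) (hC : αh * αv ≤ βh * βv) {y : ℝ}
    (h1 : -(βv / (2 * αv)) ≤ y) (h2 : y ≤ 0) :
    (αh + βh) * y ≤ αh * (1 - y) * (αv * y / (αv * y + βv)) - βh * y := by
  have h3 := mul_le_mul_of_nonneg_left h1 hαv.le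
  have h4 : αv * -(βv / (2 * αv)) = -(βv / 2) := by field_simp
  have hay : -(βv / 2) ≤ αv * y := by rw [h4] at h3; exact h3
  have hD : 0 < αv * y + βv := by linarith
  have heq : αh * (1 - y) * (αv * y / (αv * y + βv)) - βh * y - (αh + βh) * y
      = (y * (αh * αv - (αh + 2 * βh) * βv - 2 * (αh + βh) * (αv * y))) / (αv * y + βv) := by
    rw [eq_div_iff hD.ne']
    have hq : αv * y / (αv * y + βv) * (αv * y + βv) = αv * y := div_mul_cancel₀ _ hD.ne'
    linear_combination (αh * (1 - y)) * hq
  have hM : αh * αv - (αh + 2 * βh) * βv - 2 * (αh + βh) * (αv * y) ≤ 0 := by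
    nlinarith [mul_nonneg (by positivity : (0:ℝ) ≤ αh + βh) (by linarith : 0 ≤ αv * y + βv / 2)]
  have : 0 ≤ αh * (1 - y) * (αv * y / (αv * y + βv)) - βh * y - (αh + βh) * y := by
    rw [heq]
    exact div_nonneg (by nlinarith [mul_nonneg (neg_nonneg.2 h2) (neg_nonneg.2 hM)]) hD.le
  linarith


theorem stmt15 (αh βh αv βv : ℝ) (hαh : 0 < αh) (hβh : 0 < βh) (hαv : 0 < αv)
    (hβv : 0 < βv) (hC : αh * αv ≤ βh * βv) :
    (∀ z ∈ Set.Ioc (0 : ℝ) 1,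
      αh * (1 - z) * (αv * z / (αv * z + βv)) - βh * z < 0) ∧
    (∀ z ∈ Set.Icc (0 : ℝ) 1,
      αh * (1 - z) * (αv * z / (αv * z + βv)) - βh * z = 0 → z = 0) ∧
    (∀ z : ℝ → ℝ,
      (∀ t ∈ Set.Ici (0 : ℝ),
        HasDerivWithinAt z
          (αh * (1 - z t) * (αv * z t / (αv * z t + βv)) - βh * z t) (Set.Ici 0) t) →
      z 0 ∈ Set.Icc (0 : ℝ) 1 →
      (∀ t ∈ Set.Ici (0 : ℝ), z t ∈ Set.Icc (0 : ℝ) 1) ∧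
        Tendsto z atTop (nhds 0)) := by
  refine ⟨fun y hy => aux_Fneg hαh hβh hαv hβv hC hy.1 hy.2, ?_, ?_⟩
  · intro y hy h0
    by_contra hne
    exact absurd h0
      (ne_of_lt (aux_Fneg hαh hβh hαv hβv hC (lt_of_le_of_ne hy.1 (Ne.symm hne)) hy.2))
  · intro z hz hz0
    have hzc : ContinuousOn z (Set.Ici 0) := fun t ht => (hz t ht).continuousWithinAt
    have hderiv : ∀ t : ℝ, 0 < t →
        HasDerivAt z (αh * (1 - z t) * (αv * z t / (αv * z t + βv)) - βh * z t) t :=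
      fun t ht => (hz t ht.le).hasDerivAt (Ici_mem_nhds ht)
    -- upper invariance
    have hub : ∀ t ∈ Set.Ici (0:ℝ), z t ≤ 1 := by
      intro t1 ht1
      by_contra hgt
      push_neg at hgt
      set S := {t ∈ Set.Icc (0:ℝ) t1 | z t ≤ 1}
      have hSsub : S ⊆ Set.Icc 0 t1 := fun t ht => ht.1
      have hSc : IsClosed S :=
        (hzc.mono Set.Icc_subset_Ici_self).preimage_isClosed_of_isClosed isClosed_Icc isClosed_Iic
      have hScpt : IsCompact S := isCompact_Icc.of_isClosed_subset hSc hSsub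
      have hSne : S.Nonempty := ⟨0, ⟨le_refl 0, ht1⟩, hz0.2⟩
      set t0 := sSup S
      have ht0S : t0 ∈ S := hScpt.sSup_mem hSne
      have ht00 : 0 ≤ t0 := ht0S.1.1
      have ht0lt : t0 < t1 :=
        lt_of_le_of_ne ht0S.1.2 (fun h => absurd (h ▸ ht0S.2) (not_le.mpr hgt))
      have hgt1 : ∀ t ∈ Set.Ioo t0 t1, 1 < z t := by
        intro t ht
        by_contra hle
        push_neg at hle
        have hmem : t ∈ S := ⟨⟨le_trans ht00 ht.1.le, ht.2.le⟩, hle⟩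
        exact absurd (le_csSup (bddAbove_Icc.mono hSsub) hmem) (not_le.mpr ht.1)
      have hanti : AntitoneOn z (Set.Icc t0 t1) := by
        apply antitoneOn_of_deriv_nonpos (convex_Icc _ _)
          (hzc.mono (Set.Icc_subset_Ici_self.trans (Set.Ici_subset_Ici.mpr ht00)))
        · intro t ht
          rw [interior_Icc] at ht
          exact (hderiv t (lt_of_le_of_lt ht00 ht.1)).differentiableAt.differentiableWithinAt
        · intro t ht
          rw [interior_Icc] at ht
          rw [(hderiv t (lt_of_le_of_lt ht00 ht.1)).deriv]
          exact aux_Fle hαh hβh hαv hβv hC (by linarith [hgt1 t ht])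
      have := hanti ⟨le_refl t0, ht0lt.le⟩ ⟨ht0lt.le, le_refl t1⟩ ht0lt.le
      linarith [ht0S.2]
    -- lower invariance
    have hlb : ∀ t ∈ Set.Ici (0:ℝ), 0 ≤ z t := by
      intro ts hts
      by_contra hneg
      push_neg at hneg
      have hbpos : 0 < βv / (2 * αv) := by positivity
      set b := βv / (2 * αv) with hb
      set c := max (z ts) (-(b / 2)) with hc
      have hc0 : c < 0 := max_lt hneg (by linarith)
      have hcb : -b < c := lt_of_lt_of_le (by linarith) (le_max_right _ _)
      set A := {t ∈ Set.Icc (0:ℝ) ts | z t ≤ c}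
      have hAsub : A ⊆ Set.Icc 0 ts := fun t ht => ht.1
      have hAc : IsClosed A :=
        (hzc.mono Set.Icc_subset_Ici_self).preimage_isClosed_of_isClosed isClosed_Icc isClosed_Iic
      have hAcpt : IsCompact A := isCompact_Icc.of_isClosed_subset hAc hAsub
      have hAne : A.Nonempty := ⟨ts, ⟨hts, le_refl ts⟩, le_max_left _ _⟩
      set t1 := sInf A
      have ht1A : t1 ∈ A := hAcpt.sInf_mem hAne
      have ht10 : 0 ≤ t1 := ht1A.1.1
      have ht1pos : 0 < t1 := by
        rcases eq_or_lt_of_le ht10 with h | h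
        · exfalso
          have h2 := ht1A.2
          rw [← h] at h2
          linarith [hz0.1]
        · exact h
      have hbefore : ∀ t, 0 ≤ t → t < t1 → c < z t := by
        intro t h0 hlt
        by_contra hle
        push_neg at hle
        have hmem : t ∈ A := ⟨⟨h0, hlt.le.trans ht1A.1.2⟩, hle⟩
        exact absurd (csInf_le (bddBelow_Icc.mono hAsub) hmem) (not_le.mpr hlt)
      have hzt1 : c ≤ z t1 := by
        have htd : Tendsto z (𝓝[Set.Iio t1] t1) (𝓝 (z t1)) := by
          have h := (hzc t1 ht10).mono (Set.Ico_subset_Ici_self : Set.Ico (0:ℝ) t1 ⊆ _)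
          rwa [ContinuousWithinAt, nhdsWithin_Ico_eq_nhdsLT ht1pos] at h
        refine ge_of_tendsto htd ?_
        filter_upwards [self_mem_nhdsWithin,
          (eventually_gt_nhds ht1pos).filter_mono nhdsWithin_le_nhds] with t hti ht0
        exact (hbefore t ht0.le hti).le
      have hzt1neg : z t1 < 0 := lt_of_le_of_lt ht1A.2 hc0
      set B := {t ∈ Set.Icc (0:ℝ) t1 | 0 ≤ z t}
      have hBsub : B ⊆ Set.Icc 0 t1 := fun t ht => ht.1
      have hBc : IsClosed B :=
        (hzc.mono Set.Icc_subset_Ici_self).preimage_isClosed_of_isClosed isClosed_Icc isClosed_Ici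
      have hBcpt : IsCompact B := isCompact_Icc.of_isClosed_subset hBc hBsub
      have hBne : B.Nonempty := ⟨0, ⟨le_refl 0, ht10⟩, hz0.1⟩
      set t0 := sSup B
      have ht0B : t0 ∈ B := hBcpt.sSup_mem hBne
      have ht00 : 0 ≤ t0 := ht0B.1.1
      have ht0lt : t0 < t1 :=
        lt_of_le_of_ne ht0B.1.2 (fun h => absurd (h ▸ ht0B.2) (not_le.mpr hzt1neg))
      have hmid : ∀ t, t0 < t → t ≤ t1 → -b < z t ∧ z t < 0 := by
        intro t htl htr
        rcases eq_or_lt_of_le htr with h | h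
        · rw [h]
          exact ⟨lt_of_lt_of_le hcb hzt1, hzt1neg⟩
        · have h0t : 0 ≤ t := le_trans ht00 htl.le
          have hzneg : z t < 0 := by
            by_contra hge
            push_neg at hge
            have hmem : t ∈ B := ⟨⟨h0t, htr⟩, hge⟩
            exact absurd (le_csSup (bddAbove_Icc.mono hBsub) hmem) (not_le.mpr htl)
          exact ⟨lt_trans hcb (hbefore t h0t h), hzneg⟩
      have hmono : MonotoneOn (fun t => z t * Real.exp (-(αh + βh) * t)) (Set.Icc t0 t1) := by
        apply monotoneOn_of_deriv_nonneg (convex_Icc _ _)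
        · exact ((hzc.mono (Set.Icc_subset_Ici_self.trans (Set.Ici_subset_Ici.mpr ht00))).mul
            (Continuous.continuousOn (by fun_prop)))
        · intro t ht
          rw [interior_Icc] at ht
          have htpos : 0 < t := lt_of_le_of_lt ht00 ht.1
          have hE' : HasDerivAt (fun y : ℝ => Real.exp (-(αh + βh) * y))
              (Real.exp (-(αh + βh) * t) * -(αh + βh)) t := by
            simpa using ((hasDerivAt_id t).const_mul (-(αh + βh))).exp
          exact ((hderiv t htpos).mul hE').differentiableAt.differentiableWithinAt
        · intro t ht
          rw [interior_Icc] at ht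
          have htpos : 0 < t := lt_of_le_of_lt ht00 ht.1
          have hE' : HasDerivAt (fun y : ℝ => Real.exp (-(αh + βh) * y))
              (Real.exp (-(αh + βh) * t) * -(αh + βh)) t := by
            simpa using ((hasDerivAt_id t).const_mul (-(αh + βh))).exp
          have hw := (hderiv t htpos).mul hE'
          rw [show (fun t => z t * Real.exp (-(αh + βh) * t)) = (z * fun y => Real.exp (-(αh + βh) * y)) from rfl, hw.deriv]
          have hzt := hmid t ht.1 ht.2.le
          have hblow : -(βv / (2 * αv)) ≤ z t := by rw [← hb]; exact hzt.1.le
          have hkey := aux_key hαh hβh hαv hβv hC hblow hzt.2.le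
          have hE : 0 < Real.exp (-(αh + βh) * t) := Real.exp_pos _
          nlinarith [mul_nonneg hE.le (sub_nonneg.mpr hkey)]
      have hw01 := hmono (Set.mem_Icc.mpr ⟨le_refl t0, ht0lt.le⟩)
        (Set.mem_Icc.mpr ⟨ht0lt.le, le_refl t1⟩) ht0lt.le
      have hE0 : 0 < Real.exp (-(αh + βh) * t0) := Real.exp_pos _
      have hE1 : 0 < Real.exp (-(αh + βh) * t1) := Real.exp_pos _
      simp only [] at hw01
      nlinarith [mul_nonneg ht0B.2 hE0.le, mul_neg_of_neg_of_pos hzt1neg hE1]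
    have h01 : ∀ t ∈ Set.Ici (0:ℝ), z t ∈ Set.Icc (0:ℝ) 1 := fun t ht => ⟨hlb t ht, hub t ht⟩
    refine ⟨h01, ?_⟩
    have hzanti : AntitoneOn z (Set.Ici 0) := by
      apply antitoneOn_of_deriv_nonpos (convex_Ici 0) hzc
      · intro t ht
        rw [interior_Ici] at ht
        exact (hderiv t ht).differentiableAt.differentiableWithinAt
      · intro t ht
        rw [interior_Ici] at ht
        rw [(hderiv t ht).deriv]
        exact aux_Fle hαh hβh hαv hβv hC (hlb t (Set.mem_Ici.mpr (Set.mem_Ioi.mp ht).le))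
    rw [Metric.tendsto_atTop]
    intro ε hε
    by_cases hcase : ∃ t0 : ℝ, 0 ≤ t0 ∧ z t0 < ε
    · obtain ⟨t0, ht00, ht0ε⟩ := hcase
      refine ⟨t0, fun n hn => ?_⟩
      have h0n : (0:ℝ) ≤ n := le_trans ht00 hn
      have hm := hzanti ht00 h0n hn
      rw [Real.dist_eq, sub_zero, abs_of_nonneg (hlb n h0n)]
      linarith
    · exfalso
      push_neg at hcase
      have hε1 : ε ≤ 1 := le_trans (hcase 0 (le_refl 0)) hz0.2
      have hFcont : ContinuousOn
          (fun y => αh * (1 - y) * (αv * y / (αv * y + βv)) - βh * y) (Set.Icc ε 1) := by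
        apply ContinuousOn.sub
        · apply ContinuousOn.mul (by fun_prop)
          apply ContinuousOn.div (by fun_prop) (by fun_prop)
          intro y hy
          have h1 : 0 < y := lt_of_lt_of_le hε hy.1
          positivity
        · fun_prop
      obtain ⟨x0, hx0mem, hx0max⟩ :=
        isCompact_Icc.exists_isMaxOn (Set.nonempty_Icc.mpr hε1) hFcont
      have hδ : αh * (1 - x0) * (αv * x0 / (αv * x0 + βv)) - βh * x0 < 0 :=
        aux_Fneg hαh hβh hαv hβv hC (lt_of_lt_of_le hε hx0mem.1) hx0mem.2
      obtain ⟨δ, hδpos, hδbound⟩ : ∃ δ : ℝ, 0 < δ ∧ ∀ y ∈ Set.Icc ε 1,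
          αh * (1 - y) * (αv * y / (αv * y + βv)) - βh * y ≤ -δ :=
        ⟨-(αh * (1 - x0) * (αv * x0 / (αv * x0 + βv)) - βh * x0), by linarith,
          fun y hy => by have h := (isMaxOn_iff.mp hx0max) y hy; linarith⟩
      have hwanti : AntitoneOn (fun t => z t + δ * t) (Set.Ici 0) := by
        apply antitoneOn_of_deriv_nonpos (convex_Ici 0)
          (hzc.add (Continuous.continuousOn (by fun_prop)))
        · intro t ht
          rw [interior_Ici] at ht
          have hlin : HasDerivAt (fun y : ℝ => δ * y) δ t := by
            simpa using (hasDerivAt_id t).const_mul δ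
          exact ((hderiv t ht).add hlin).differentiableAt.differentiableWithinAt
        · intro t ht
          rw [interior_Ici] at ht
          have hlin : HasDerivAt (fun y : ℝ => δ * y) δ t := by
            simpa using (hasDerivAt_id t).const_mul δ
          rw [((hderiv t ht).add hlin).deriv]
          have hbd := hδbound (z t) ⟨hcase t ht.le, hub t (Set.mem_Ici.mpr (Set.mem_Ioi.mp ht).le)⟩
          linarith
      have h2δ : (0:ℝ) ≤ 2 / δ := by positivity
      have hfin := hwanti Set.self_mem_Ici h2δ h2δ
      simp only [] at hfin
      have hδ2 : δ * (2 / δ) = 2 := by field_simp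
      have hz2 := hlb (2 / δ) h2δ
      nlinarith [hz0.2]
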